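/- arXiv:2403.20111 — 2 statements merged into one kernel-verified Lean document; each statement's English description precedes it below -/
import Mathlib

section
/- The polynomial x⁴ − x³ − x² − x + 1 ∈ ℤ[x] has at least one complex root of absolute value 1 (i.e., it is toral as a one-variable polynomial). -/
/-- The polynomial `x⁴ − x³ − x² − x + 1` has a complex root of absolute value 1:
it is toral as a one-variable polynomial. -/
theorem stmt_3 : ∃ z : ℂ, ‖z‖ = 1 ∧ z ^ 4 - z ^ 3 - z ^ 2 - z + 1 = 0 := by
  set w : ℝ := (1 - Real.sqrt 13) / 2 with hwdef
  have h13 : Real.sqrt 13 ^ 2 = 13 := Real.sq_sqrt (by norm_num)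
  have hw : w ^ 2 = w + 3 := by
    rw [hwdef]; nlinarith [h13]
  have hwle : w ≤ 1 := by
    have : Real.sqrt 13 ≥ 0 := Real.sqrt_nonneg 13
    rw [hwdef]; linarith
  have hnn : (0:ℝ) ≤ 1 - (w/2)^2 := by nlinarith [hw]
  set s : ℝ := Real.sqrt (1 - (w/2)^2) with hsdef
  have hs : s ^ 2 = 1 - (w/2)^2 := Real.sq_sqrt hnn
  set z : ℂ := ⟨w/2, s⟩ with hzdef
  have hre : z.re = w/2 := rfl
  have him : z.im = s := rfl
  refine ⟨z, ?_, ?_⟩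
  · have habs : ‖z‖ ^ 2 = 1 := by
      rw [Complex.sq_norm, Complex.normSq_apply, hre, him]
      nlinarith [hs]
    nlinarith [habs, norm_nonneg z]
  · have hz2 : z ^ 2 = (w : ℂ) * z - 1 := by
      apply Complex.ext <;>
        simp [pow_two, Complex.mul_re, Complex.mul_im, hre, him, Complex.ofReal_re,
          Complex.ofReal_im] <;> nlinarith [hs, hw]
    have hw' : (w : ℂ) ^ 2 = (w : ℂ) + 3 := by
      have := congrArg (Complex.ofReal) hw
      push_cast at this
      exact this
    linear_combination (z^2 + ((w:ℂ)-1)*z + ((w:ℂ)^2 - (w:ℂ) - 2)) * hz2 +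
      ((w:ℂ)*z - 1) * hw'
end

section
/- The quotient module R₂/⟨2, 1+x+y⟩ is not lacunarily independent: for F = {0, 1} ⊂ R₂/⟨2, 1+x+y⟩ and for every M ≥ 1, there exists a finite subset S ⊂ ℤ² with pairwise distances at least M such that the collection {x^n·F : n ∈ S} is not independent, i.e., there exist two distinct choices of elements from the sets x^n·F with equal sums. -/
/-- `R₂ = ℤ[x^{±1}, y^{±1}]`, as the group algebra `ℤ[ℤ²]`. -/
abbrev R2 := AddMonoidAlgebra ℤ (Fin 2 → ℤ)

/-- The monomial `x^n` for `n ∈ ℤ²`. -/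
noncomputable def mono (n : Fin 2 → ℤ) : R2 := AddMonoidAlgebra.single n 1

/-- The ideal `⟨2, 1 + x + y⟩` of `R₂`. -/
noncomputable def frakp : Ideal R2 :=
  Ideal.span {(2 : R2), 1 + mono ![1, 0] + mono ![0, 1]}

/-- The sup-norm `‖m‖ = max_j |m_j|` on `ℤ²`. -/
def snorm (m : Fin 2 → ℤ) : ℕ := Finset.univ.sup fun j => (m j).natAbs

open Polynomial in
lemma one_not_mem_frakp : (1 : R2) ∉ frakp := by
  set f : (ZMod 2)[X] := X ^ 2 + X + 1 with hf
  have hdeg : f.degree = 2 := by rw [hf]; compute_degree!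
  haveI : Nontrivial (AdjoinRoot f) := AdjoinRoot.nontrivial f (by rw [hdeg]; decide)
  set ω : AdjoinRoot f := AdjoinRoot.root f with hroot
  have h2 : (2 : AdjoinRoot f) = 0 := by
    rw [show (2 : AdjoinRoot f) = algebraMap (ZMod 2) _ 2 from (map_ofNat _ 2).symm,
      show (2 : ZMod 2) = 0 by decide, map_zero]
  have hω : ω ^ 2 + ω + 1 = 0 := by
    have := AdjoinRoot.eval₂_root f
    simpa [hf] using this
  have hunit : ω * (ω + 1) = 1 := by linear_combination hω - h2
  set ωu : (AdjoinRoot f)ˣ := ⟨ω, ω + 1, hunit, by rw [mul_comm]; exact hunit⟩ with hωu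
  set ee : (Fin 2 → ℤ) →+ ℤ :=
    { toFun := fun n => n 0 + 2 * n 1
      map_zero' := by simp
      map_add' := by intro a b; simp; ring } with hee
  set G : Multiplicative (Fin 2 → ℤ) →* AdjoinRoot f :=
    (Units.coeHom _).comp ((zpowersHom _ ωu).comp (AddMonoidHom.toMultiplicative ee)) with hG
  set φ := AddMonoidAlgebra.lift ℤ (AdjoinRoot f) (Fin 2 → ℤ) G with hφ
  have hmono : ∀ n : Fin 2 → ℤ,
      φ (mono n) = ((ωu ^ (n 0 + n 1 * 2) : (AdjoinRoot f)ˣ) : AdjoinRoot f) := by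
    intro n
    simp [hφ, mono, AddMonoidAlgebra.lift_single, hG, hee]
  have hx : φ (mono ![1, 0]) = ω := by
    rw [hmono]; norm_num; rfl
  have hy : φ (mono ![0, 1]) = ω ^ 2 := by
    rw [hmono]; norm_num
    rfl
  have hgen : φ (1 + mono ![1, 0] + mono ![0, 1]) = 0 := by
    rw [map_add, map_add, map_one, hx, hy]; linear_combination hω
  have hker : frakp ≤ RingHom.ker (φ : R2 →+* AdjoinRoot f) := by
    rw [frakp, Ideal.span_le]
    intro r hr
    rw [SetLike.mem_coe, RingHom.mem_ker]
    simp only [Set.mem_insert_iff, Set.mem_singleton_iff] at hr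
    rcases hr with rfl | rfl
    · rw [show ((2 : R2)) = 1 + 1 by norm_num, map_add, map_one]
      linear_combination h2
    · exact hgen
  intro h1
  have : φ 1 = 0 := hker h1
  simp at this

lemma two_zero : (2 : R2 ⧸ frakp) = 0 := by
  have : (2 : R2) ∈ frakp := Ideal.subset_span (by simp)
  rw [show (2 : R2 ⧸ frakp) = Ideal.Quotient.mk frakp 2 from (map_ofNat _ 2).symm]
  exact Ideal.Quotient.eq_zero_iff_mem.2 this

lemma rel : (1 : R2 ⧸ frakp) + Ideal.Quotient.mk frakp (mono ![1, 0])
    + Ideal.Quotient.mk frakp (mono ![0, 1]) = 0 := by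
  have : (1 + mono ![1, 0] + mono ![0, 1]) ∈ frakp := Ideal.subset_span (by simp)
  have h := (Ideal.Quotient.eq_zero_iff_mem (I := frakp)).2 this
  rw [map_add, map_add, map_one] at h
  exact h

lemma key (k : ℕ) : (1 : R2 ⧸ frakp)
    + (Ideal.Quotient.mk frakp (mono ![1, 0])) ^ (2 ^ k)
    + (Ideal.Quotient.mk frakp (mono ![0, 1])) ^ (2 ^ k) = 0 := by
  induction k with
  | zero => simpa using rel
  | succ k ih =>
    set U := (Ideal.Quotient.mk frakp (mono ![1, 0])) ^ (2 ^ k)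
    set V := (Ideal.Quotient.mk frakp (mono ![0, 1])) ^ (2 ^ k)
    rw [pow_succ, pow_mul, pow_mul]
    show (1 : R2 ⧸ frakp) + U ^ 2 + V ^ 2 = 0
    linear_combination (1 + U + V) * ih - (U + V + U * V) * two_zero

lemma mono_pow (n : ℕ) (v : Fin 2 → ℤ) : mono v ^ n = mono (n • v) := by
  simp [mono, AddMonoidAlgebra.single_pow]

lemma mono_zero : mono 0 = (1 : R2) := rfl

/-- The `R₂`-module `R₂/⟨2, 1+x+y⟩` is not lacunarily independent: taking
`F = {0, 1}`, for every `M ≥ 1` there is a finite set `S ⊂ ℤ²` with pairwise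
sup-distances at least `M` and two distinct choices of elements of `F` indexed by `S`
whose monomial-weighted sums `∑_{n ∈ S} x^n·a_n` agree. -/
theorem stmt_11 (M : ℕ) (hM : 1 ≤ M) :
    ∃ S : Finset (Fin 2 → ℤ),
      (∀ m ∈ S, ∀ n ∈ S, m ≠ n → M ≤ snorm (m - n)) ∧
      ∃ a b : (Fin 2 → ℤ) → R2 ⧸ frakp,
        (∀ n ∈ S, a n = 0 ∨ a n = 1) ∧
        (∀ n ∈ S, b n = 0 ∨ b n = 1) ∧
        (∑ n ∈ S, Ideal.Quotient.mk frakp (mono n) * a n) =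
          (∑ n ∈ S, Ideal.Quotient.mk frakp (mono n) * b n) ∧
        ∃ n ∈ S, a n ≠ b n := by
  classical
  set N : ℕ := 2 ^ M with hNdef
  have hMN : M ≤ N := (Nat.lt_two_pow_self (n := M)).le
  have hN0 : 0 < N := Nat.pow_pos (by norm_num)
  have hNz : (N : ℤ) ≠ 0 := Int.natCast_ne_zero.2 hN0.ne'
  set p : Fin 2 → ℤ := ![(N : ℤ), 0] with hp
  set q : Fin 2 → ℤ := ![0, (N : ℤ)] with hq
  have hpq : p ≠ q := fun h => hNz (by simpa [hp, hq] using congrFun h 0)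
  have hp0 : p ≠ 0 := fun h => hNz (by simpa [hp] using congrFun h 0)
  have hq0 : q ≠ 0 := fun h => hNz (by simpa [hq] using congrFun h 1)
  have hsn : ∀ (v : Fin 2 → ℤ) (j : Fin 2), M ≤ (v j).natAbs → M ≤ snorm v :=
    fun v j h => le_trans h (Finset.le_sup (f := fun j => (v j).natAbs) (Finset.mem_univ j))
  refine ⟨({0, p, q} : Finset (Fin 2 → ℤ)), ?_, (fun _ => 1), (fun _ => 0), ?_, ?_, ?_, ?_⟩
  · intro m hm n hn hmn
    simp only [Finset.mem_insert, Finset.mem_singleton] at hm hn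
    rcases hm with rfl | rfl | rfl <;> rcases hn with rfl | rfl | rfl <;>
      first
        | exact absurd rfl hmn
        | · refine hsn _ 0 ?_
            simpa [hp, hq] using hMN
        | · refine hsn _ 1 ?_
            simpa [hp, hq] using hMN
  · intro n _; right; rfl
  · intro n _; left; rfl
  · have h0m : (0 : Fin 2 → ℤ) ∉ ({p, q} : Finset (Fin 2 → ℤ)) := by
      simp [Ne.symm hp0, Ne.symm hq0]
    have hpm : p ∉ ({q} : Finset (Fin 2 → ℤ)) := by simp [hpq]
    have hpe : mono p = mono ![1, 0] ^ N := by
      rw [mono_pow]; congr 1; funext i; fin_cases i <;> simp [hp]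
    have hqe : mono q = mono ![0, 1] ^ N := by
      rw [mono_pow]; congr 1; funext i; fin_cases i <;> simp [hq]
    rw [Finset.sum_insert h0m, Finset.sum_insert hpm, Finset.sum_singleton,
        Finset.sum_insert h0m, Finset.sum_insert hpm, Finset.sum_singleton]
    simp only [mul_one, mul_zero, add_zero]
    rw [mono_zero, map_one, hpe, hqe, map_pow, map_pow]
    have h := key M
    rw [← hNdef] at h
    linear_combination h
  · refine ⟨0, by simp, ?_⟩
    intro h
    exact one_not_mem_frakp (Ideal.Quotient.eq_zero_iff_mem.1 (by rw [map_one]; exact h))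
end
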